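/- In the Vasicek model, the explicit controls π*(x,y,r,t) := (2y/σ(t))·(λ + σ̄·B₁(t))·(A₂(t)/A₁(t))·e^{-B₁(t)·r} - x·(σ̄/σ(t))·B₁(t) and η* (t) := -λ - σ̄·B₁(t) form a pointwise saddle point of the Isaacs expression: for all x ∈ ℝ, y > 0, r ∈ ℝ, t ∈ [0,T], (i) Λ^{π*(x,y,r,t), η}(x,y,r,t) ≤ 0 for every η ∈ ℝ; (ii) Λ^{π, η*(t)}(x,y,r,t) ≥ 0 for every π ∈ ℝ; (iii) Λ^{π*(x,y,r,t), η*(t)}(x,y,r,t) = 0. -/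

import Mathlib

/- STATEMENT 17: In the Vasicek model the explicit controls
π*(x,y,r,t) = (2y/σ(t))(λ + σ̄B₁(t))(A₂(t)/A₁(t))e^{-B₁(t)r} - x(σ̄/σ(t))B₁(t) and
η*(t) = -λ - σ̄B₁(t) form a pointwise saddle point of the Isaacs expression: for all
x ∈ ℝ, y > 0, r ∈ ℝ, t ∈ [0,T], (i) Λ^{π*,η} ≤ 0 for every η; (ii) Λ^{π,η*} ≥ 0 for
every π; (iii) Λ^{π*,η*} = 0. -/
theorem stmt_17
    (T : ℝ) (hT : 0 < T)
    (α lam θ σb : ℝ) (hα : 0 < α)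
    (σ : ℝ → ℝ) (hσcont : Continuous σ) (hσpos : ∀ t, 0 < σ t)
    (B1 A1 A2 : ℝ → ℝ)
    (hB1 : ∀ t : ℝ, B1 t = (1 / α) * (1 - Real.exp (-(α * (T - t)))))
    (hA1 : ∀ t : ℝ, A1 t =
      -Real.exp (∫ s in t..T, ((θ - σb * lam) * B1 s - (1 / 2) * σb ^ 2 * (B1 s) ^ 2)))
    (hA2 : ∀ t : ℝ, A2 t = -Real.exp (∫ s in t..T, (lam + σb * B1 s) ^ 2))
    (H G : ℝ → ℝ → ℝ)
    (hH : ∀ r t : ℝ, H r t = A1 t * Real.exp (B1 t * r))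
    (hG : ∀ r t : ℝ, G r t = A2 t)
    (Lam : ℝ → ℝ → ℝ → ℝ → ℝ → ℝ → ℝ)
    (hLam : ∀ π η x y r t : ℝ, Lam π η x y r t =
      x * deriv (fun s => H r s) t + y * deriv (fun s => G r s) t
        + (π * σ t * (lam + η) + r * x) * H r t + η ^ 2 * y * G r t
        + (θ - α * r + σb * η) *
            (x * deriv (fun p => H p t) r + y * deriv (fun p => G p t) r)
        + (1 / 2) * σb ^ 2 *
            (x * deriv (fun p => deriv (fun q => H q t) p) r
              + y * deriv (fun p => deriv (fun q => G q t) p) r)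
        + π * σ t * σb * deriv (fun p => H p t) r
        + η * σb * y * deriv (fun p => G p t) r)
    (pistar : ℝ → ℝ → ℝ → ℝ → ℝ)
    (hpistar : ∀ x y r t : ℝ, pistar x y r t =
      (2 * y / σ t) * (lam + σb * B1 t) * (A2 t / A1 t) * Real.exp (-(B1 t * r))
        - x * (σb / σ t) * B1 t)
    (etastar : ℝ → ℝ)
    (hetastar : ∀ t : ℝ, etastar t = -lam - σb * B1 t) :
    ∀ x y r : ℝ, 0 < y → ∀ t ∈ Set.Icc (0 : ℝ) T,
      (∀ η : ℝ, Lam (pistar x y r t) η x y r t ≤ 0) ∧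
      (∀ π : ℝ, 0 ≤ Lam π (etastar t) x y r t) ∧
      Lam (pistar x y r t) (etastar t) x y r t = 0 := by
  have hα' : α ≠ 0 := ne_of_gt hα
  -- derivative of B1
  have hB1deriv : ∀ t : ℝ, HasDerivAt B1 (α * B1 t - 1) t := by
    intro t
    have h1 : HasDerivAt (fun u : ℝ => -(α * (T - u))) α t := by
      have := (((hasDerivAt_id t).const_sub T).const_mul α).neg
      exact this.congr_deriv (by ring)
    have h2 := ((h1.exp.const_sub 1).const_mul (1 / α))
    have heq : (fun u : ℝ => (1 / α) * (1 - Real.exp (-(α * (T - u))))) = B1 :=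
      (funext fun u => (hB1 u).symm)
    rw [heq] at h2
    refine h2.congr_deriv ?_
    have hb := hB1 t
    rw [hb]
    linear_combination -(mul_one_div_cancel hα')
  have hB1cont : Continuous B1 := by
    have : Differentiable ℝ B1 := fun t => (hB1deriv t).differentiableAt
    exact this.continuous
  -- derivative of A1
  set f1 : ℝ → ℝ := fun s => (θ - σb * lam) * B1 s - (1 / 2) * σb ^ 2 * (B1 s) ^ 2 with hf1
  have hf1cont : Continuous f1 := by
    apply Continuous.sub
    · exact continuous_const.mul hB1cont
    · exact continuous_const.mul (hB1cont.pow 2)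
  have hA1deriv : ∀ t : ℝ, HasDerivAt A1 (-(A1 t) * f1 t) t := by
    intro t
    have hint : HasDerivAt (fun u => ∫ s in u..T, f1 s) (-f1 t) t :=
      intervalIntegral.integral_hasDerivAt_left
        (hf1cont.intervalIntegrable t T)
        (hf1cont.aestronglyMeasurable.stronglyMeasurableAtFilter)
        hf1cont.continuousAt
    have h2 : HasDerivAt (fun u => -Real.exp (∫ s in u..T, f1 s))
        (-(Real.exp (∫ s in t..T, f1 s) * (-f1 t))) t := hint.exp.neg
    have heq : (fun u => -Real.exp (∫ s in u..T, f1 s)) = A1 :=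
      funext fun u => (hA1 u).symm
    rw [heq] at h2
    convert h2 using 1
    rw [hA1 t]; ring
  -- derivative of A2
  set g1 : ℝ → ℝ := fun s => (lam + σb * B1 s) ^ 2 with hg1
  have hg1cont : Continuous g1 := (continuous_const.add (continuous_const.mul hB1cont)).pow 2
  have hA2deriv : ∀ t : ℝ, HasDerivAt A2 (-(A2 t) * g1 t) t := by
    intro t
    have hint : HasDerivAt (fun u => ∫ s in u..T, g1 s) (-g1 t) t :=
      intervalIntegral.integral_hasDerivAt_left
        (hg1cont.intervalIntegrable t T)
        (hg1cont.aestronglyMeasurable.stronglyMeasurableAtFilter)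
        hg1cont.continuousAt
    have h2 : HasDerivAt (fun u => -Real.exp (∫ s in u..T, g1 s))
        (-(Real.exp (∫ s in t..T, g1 s) * (-g1 t))) t := hint.exp.neg
    have heq : (fun u => -Real.exp (∫ s in u..T, g1 s)) = A2 :=
      funext fun u => (hA2 u).symm
    rw [heq] at h2
    convert h2 using 1
    rw [hA2 t]; ring
  -- A1 is nonzero, A2 is negative
  have hA1ne : ∀ t : ℝ, A1 t ≠ 0 := by
    intro t; rw [hA1 t]
    exact neg_ne_zero.mpr (Real.exp_ne_zero _)
  have hA2neg : ∀ t : ℝ, A2 t < 0 := by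
    intro t; rw [hA2 t]
    exact neg_neg_iff_pos.mpr (Real.exp_pos _)
  -- compute the t-derivative of H r ·
  have hHt : ∀ r t : ℝ, deriv (fun s => H r s) t
      = (-(A1 t) * f1 t) * Real.exp (B1 t * r)
        + A1 t * (Real.exp (B1 t * r) * ((α * B1 t - 1) * r)) := by
    intro r t
    have h1 : HasDerivAt (fun s => A1 s * Real.exp (B1 s * r))
        ((-(A1 t) * f1 t) * Real.exp (B1 t * r)
          + A1 t * (Real.exp (B1 t * r) * ((α * B1 t - 1) * r))) t :=
      (hA1deriv t).mul (((hB1deriv t).mul_const r).exp)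
    have heq : (fun s => A1 s * Real.exp (B1 s * r)) = fun s => H r s :=
      funext fun s => (hH r s).symm
    rw [heq] at h1
    exact h1.deriv
  -- compute the t-derivative of G r ·
  have hGt : ∀ r t : ℝ, deriv (fun s => G r s) t = -(A2 t) * g1 t := by
    intro r t
    have h1 : HasDerivAt (fun s => A2 s) (-(A2 t) * g1 t) t := hA2deriv t
    have heq : (fun s : ℝ => A2 s) = fun s => G r s := funext fun s => (hG r s).symm
    rw [heq] at h1
    exact h1.deriv
  -- r-derivatives of H
  have hHrA : ∀ t p : ℝ, HasDerivAt (fun q => H q t)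
      (A1 t * B1 t * Real.exp (B1 t * p)) p := by
    intro t p
    have h1 : HasDerivAt (fun q => A1 t * Real.exp (B1 t * q))
        (A1 t * (Real.exp (B1 t * p) * (B1 t * 1))) p := by
      have h0 := (((hasDerivAt_id p).const_mul (B1 t)).exp.const_mul (A1 t))
      simpa using h0
    have heq : (fun q => A1 t * Real.exp (B1 t * q)) = fun q => H q t :=
      funext fun q => (hH q t).symm
    rw [heq] at h1
    convert h1 using 1; ring
  have hHr : ∀ t p : ℝ, deriv (fun q => H q t) p = A1 t * B1 t * Real.exp (B1 t * p) :=
    fun t p => (hHrA t p).deriv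
  have hHrr : ∀ t r : ℝ, deriv (fun p => deriv (fun q => H q t) p) r
      = A1 t * B1 t * B1 t * Real.exp (B1 t * r) := by
    intro t r
    have heq : (fun p => deriv (fun q => H q t) p)
        = fun p => A1 t * B1 t * Real.exp (B1 t * p) := funext fun p => hHr t p
    rw [heq]
    have h1 : HasDerivAt (fun p => A1 t * B1 t * Real.exp (B1 t * p))
        (A1 t * B1 t * (Real.exp (B1 t * r) * B1 t)) r := by
      have := (((hasDerivAt_id r).const_mul (B1 t)).exp.const_mul (A1 t * B1 t))
      simpa using this
    rw [h1.deriv]; ring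
  -- r-derivatives of G vanish
  have hGr : ∀ t p : ℝ, deriv (fun q => G q t) p = 0 := by
    intro t p
    have heq : (fun q : ℝ => G q t) = fun _ => A2 t := funext fun q => hG q t
    rw [heq, deriv_const]
  have hGrr : ∀ t r : ℝ, deriv (fun p => deriv (fun q => G q t) p) r = 0 := by
    intro t r
    have heq : (fun p => deriv (fun q => G q t) p) = fun _ : ℝ => (0 : ℝ) :=
      funext fun p => hGr t p
    rw [heq, deriv_const]
  -- key factorization of the Isaacs expression
  have key : ∀ π η x y r t : ℝ, Lam π η x y r t
      = (lam + σb * B1 t + η) *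
          (A1 t * Real.exp (B1 t * r) * (σb * B1 t * x + π * σ t)
            + y * A2 t * (η - lam - σb * B1 t)) := by
    intro π η x y r t
    rw [hLam, hHt, hGt, hHr, hGr, hHrr, hGrr, hH, hG, hf1, hg1]
    ring
  intro x y r hy t ht
  have hσne : σ t ≠ 0 := ne_of_gt (hσpos t)
  have hexp : Real.exp (B1 t * r) * Real.exp (-(B1 t * r)) = 1 := by
    rw [← Real.exp_add]; simp
  -- value with π = pistar
  have hpival : ∀ η : ℝ, Lam (pistar x y r t) η x y r t
      = y * A2 t * (lam + σb * B1 t + η) ^ 2 := by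
    intro η
    rw [key, hpistar]
    have h1 : A1 t * Real.exp (B1 t * r) *
        (σb * B1 t * x +
          ((2 * y / σ t) * (lam + σb * B1 t) * (A2 t / A1 t) * Real.exp (-(B1 t * r))
            - x * (σb / σ t) * B1 t) * σ t)
        = 2 * y * (lam + σb * B1 t) * A2 t := by
      field_simp [hA1ne t]
      linear_combination (2 * y * (lam + σb * B1 t) * A2 t) * hexp
    rw [h1]; ring
  refine ⟨?_, ?_, ?_⟩
  · intro η
    rw [hpival η]
    exact mul_nonpos_of_nonpos_of_nonneg
      (le_of_lt (mul_neg_of_pos_of_neg hy (hA2neg t))) (sq_nonneg _)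
  · intro π
    rw [key, hetastar]
    have : lam + σb * B1 t + (-lam - σb * B1 t) = 0 := by ring
    rw [this, zero_mul]
  · rw [key, hetastar]
    have : lam + σb * B1 t + (-lam - σb * B1 t) = 0 := by ring
    rw [this, zero_mul]
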